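/- Let q > 0 and let E_1, ..., E_k be linear expressions in a polymatroid h of the form E_ℓ(h) = Σ_j d_{ℓ,j}·(h(X_{ℓ,j} ∪ Y_{ℓ,j}) - h(X_{ℓ,j})) with all d_{ℓ,j} ≥ 0 and |X_{ℓ,j}| ≤ 1 (simple conditional expressions). If the inequality q·h([n]) ≤ max_{ℓ∈[k]} E_ℓ(h) holds for every normal polymatroid h, then it holds for every polymatroid h. -/
import Mathlib


/-- The step function at `W`: `0` on subsets of `W`, `1` otherwise. -/
def stepFn {n : ℕ} (W X : Finset (Fin n)) : ℝ := if X ⊆ W then 0 else 1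

/-- A normal polymatroid: a non-negative linear combination of step functions `h_W`, `W ⊊ [n]`. -/
def IsNormal {n : ℕ} (h : Finset (Fin n) → ℝ) : Prop :=
  ∃ c : Finset (Fin n) → ℝ, (∀ W, 0 ≤ c W) ∧
    ∀ X, h X = ∑ W ∈ Finset.univ.filter (fun W => W ≠ Finset.univ), c W * stepFn W X

/-- A polymatroid on `[n]`: non-negative, zero on `∅`, monotone and submodular. -/
def IsPolymatroid {n : ℕ} (h : Finset (Fin n) → ℝ) : Prop :=
  h ∅ = 0 ∧ (∀ X, 0 ≤ h X) ∧
    (∀ X Y : Finset (Fin n), h X ≤ h (X ∪ Y)) ∧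
    (∀ X Y : Finset (Fin n), h (X ∪ Y) + h (X ∩ Y) ≤ h X + h Y)

namespace SimpleMaxAux

open Finset

variable {n : ℕ}

/-- Evaluate a coefficient vector as a nonneg combination of step functions. -/
noncomputable def NEval (c : Finset (Fin n) → ℝ) (X : Finset (Fin n)) : ℝ :=
  ∑ W : Finset (Fin n), c W * stepFn W X

lemma stepFn_empty (W : Finset (Fin n)) : stepFn W ∅ = 0 := by
  simp [stepFn]

lemma NEval_empty (c : Finset (Fin n) → ℝ) : NEval c ∅ = 0 := by
  simp [NEval, stepFn_empty]

lemma NEval_add (c₁ c₂ : Finset (Fin n) → ℝ) (X : Finset (Fin n)) :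
    NEval (fun W => c₁ W + c₂ W) X = NEval c₁ X + NEval c₂ X := by
  simp [NEval, add_mul, Finset.sum_add_distrib]

lemma NEval_single (a : ℝ) (X : Finset (Fin n)) :
    NEval (fun W => if W = (∅ : Finset (Fin n)) then a else 0) X = a * stepFn ∅ X := by
  classical
  rw [NEval, Finset.sum_eq_single (∅ : Finset (Fin n))]
  · simp
  · intro W _ hW; simp [hW]
  · simp

lemma NEval_lift (u : Fin n) (c : Finset (Fin n) → ℝ)
    (hc : ∀ W, u ∈ W → c W = 0) (X : Finset (Fin n)) :
    NEval (fun W => if u ∈ W then c (W.erase u) else 0) X = NEval c (X.erase u) := by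
  classical
  have hinv : Function.Involutive
      (fun W : Finset (Fin n) => if u ∈ W then W.erase u else insert u W) := by
    intro W
    by_cases hu : u ∈ W
    · simp [hu, Finset.notMem_erase, Finset.insert_erase hu]
    · simp [hu, Finset.erase_insert hu]
  rw [NEval, NEval]
  refine Fintype.sum_bijective _ hinv.bijective _ _ ?_
  intro W
  by_cases hu : u ∈ W
  · simp only [hu, if_true]
    have hsub : (X ⊆ W) ↔ (X.erase u ⊆ W.erase u) := by
      conv_lhs => rw [← Finset.insert_erase hu]
      exact Finset.subset_insert_iff
    simp only [stepFn]
    rw [if_congr hsub rfl rfl]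
  · simp only [hu, if_false, zero_mul]
    rw [hc _ (Finset.mem_insert_self u W), zero_mul]

lemma contraction_polymatroid (h : Finset (Fin n) → ℝ) (hp : IsPolymatroid h) (u : Fin n) :
    IsPolymatroid (fun X => h (insert u X) - h {u}) := by
  obtain ⟨h0, hpos, hmono, hsubm⟩ := hp
  refine ⟨by simp, ?_, ?_, ?_⟩
  · intro X
    have h1 := hmono {u} X
    have e : ({u} : Finset (Fin n)) ∪ X = insert u X := by
      rw [← Finset.insert_eq]
    rw [e] at h1
    simp only [sub_nonneg]
    exact h1
  · intro X Y
    have h1 := hmono (insert u X) Y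
    rw [Finset.insert_union] at h1
    simp only [sub_le_sub_iff_right]
    exact h1
  · intro X Y
    have h1 := hsubm (insert u X) (insert u Y)
    rw [← Finset.insert_union_distrib, ← Finset.insert_inter_distrib] at h1
    dsimp only
    linarith

/-- The chain-measure lemma: the "layer cake" of `X ↦ H - min_{v∈X} φ v` is a nonneg
combination of step functions on subsets of `T`. -/
lemma chain_lemma (T : Finset (Fin n)) : ∀ (φ : Fin n → ℝ) (H : ℝ), 0 ≤ H →
    (∀ v ∈ T, 0 ≤ φ v ∧ φ v ≤ H) →
    ∃ b : Finset (Fin n) → ℝ, (∀ W, 0 ≤ b W) ∧ (∀ W, ¬ W ⊆ T → b W = 0) ∧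
      (∀ X, ¬ X ⊆ T → NEval b X = H) ∧
      (∀ v ∈ T, NEval b {v} = H - φ v) ∧
      (∀ X, X ⊆ T → X.Nonempty → ∃ v ∈ X, NEval b X ≤ H - φ v) := by
  classical
  induction T using Finset.strongInduction with
  | _ T IH =>
  intro φ H hH hφ
  rcases T.eq_empty_or_nonempty with rfl | hT
  · refine ⟨fun W => if W = ∅ then H else 0, ?_, ?_, ?_, ?_, ?_⟩
    · intro W; dsimp only; split <;> simp [hH]
    · intro W hW
      dsimp only
      rw [if_neg]; rintro rfl; exact hW (by simp)
    · intro X hX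
      have hXne : X ≠ ∅ := by rintro rfl; exact hX (by simp)
      rw [NEval_single]
      simp [stepFn, Finset.subset_empty, hXne]
    · simp
    · intro X hX hne
      rw [Finset.subset_empty] at hX
      subst hX; simpa using hne
  · obtain ⟨v, hv, hvmax⟩ := T.exists_max_image φ hT
    obtain ⟨b'', hb0, hbsupp, hbout, hbsing, hbdom⟩ :=
      IH (T.erase v) (Finset.erase_ssubset hv) φ (φ v) (hφ v hv).1
        (fun w hw => ⟨(hφ w (Finset.mem_of_mem_erase hw)).1,
          hvmax w (Finset.mem_of_mem_erase hw)⟩)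
    have hb''v : ∀ W, v ∈ W → b'' W = 0 := by
      intro W hW
      exact hbsupp W (fun hsub => Finset.notMem_erase v T (hsub hW))
    set b : Finset (Fin n) → ℝ :=
      fun W => (if W = ∅ then H - φ v else 0) + (if v ∈ W then b'' (W.erase v) else 0) with hbdef
    have heval : ∀ X, NEval b X = (H - φ v) * stepFn ∅ X + NEval b'' (X.erase v) := by
      intro X
      rw [hbdef, NEval_add, NEval_single, NEval_lift v b'' hb''v]
    have hHv : φ v ≤ H := (hφ v hv).2
    have hsubT : ∀ X : Finset (Fin n), X.erase v ⊆ T.erase v → X ⊆ T := by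
      intro X hsub x hx
      by_cases hxv : x = v
      · exact hxv ▸ hv
      · exact Finset.mem_of_mem_erase (hsub (Finset.mem_erase.mpr ⟨hxv, hx⟩))
    refine ⟨b, ?_, ?_, ?_, ?_, ?_⟩
    · intro W
      simp only [hbdef]
      apply add_nonneg
      · split
        · linarith
        · exact le_refl 0
      · split
        · exact hb0 _
        · exact le_refl 0
    · intro W hW
      have h1 : W ≠ ∅ := by rintro rfl; exact hW (Finset.empty_subset T)
      simp only [hbdef, if_neg h1, zero_add]
      split
      · apply hbsupp
        intro hsub
        exact hW (hsubT W hsub)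
      · rfl
    · intro X hX
      have hXne : X ≠ ∅ := by rintro rfl; exact hX (Finset.empty_subset T)
      have hstep : stepFn (∅ : Finset (Fin n)) X = 1 := by
        simp [stepFn, Finset.subset_empty, hXne]
      have hXe : ¬ X.erase v ⊆ T.erase v := fun hsub => hX (hsubT X hsub)
      rw [heval, hstep, hbout _ hXe]
      ring
    · intro w hw
      by_cases hwv : w = v
      · subst hwv
        have : ({w} : Finset (Fin n)).erase w = ∅ := Finset.erase_singleton w
        rw [heval, this, NEval_empty]
        have hstep : stepFn (∅ : Finset (Fin n)) {w} = 1 := by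
          simp [stepFn, Finset.subset_empty]
        rw [hstep]; ring
      · have hmem : w ∈ T.erase v := Finset.mem_erase.mpr ⟨hwv, hw⟩
        have : ({w} : Finset (Fin n)).erase v = {w} := by
          apply Finset.erase_eq_of_notMem
          simp [Ne.symm hwv]
        rw [heval, this, hbsing w hmem]
        have hstep : stepFn (∅ : Finset (Fin n)) {w} = 1 := by
          simp [stepFn, Finset.subset_empty]
        rw [hstep]; ring
    · intro X hXT hne
      have hXne : X ≠ ∅ := Finset.nonempty_iff_ne_empty.mp hne
      have hstep : stepFn (∅ : Finset (Fin n)) X = 1 := by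
        simp [stepFn, Finset.subset_empty, hXne]
      by_cases hXv : X.erase v = ∅
      · rcases (Finset.erase_eq_empty_iff X v).mp hXv with rfl | rfl
        · exact absurd rfl hXne
        · refine ⟨v, Finset.mem_singleton_self v, ?_⟩
          rw [heval, hXv, NEval_empty, hstep]
          ring_nf
          exact le_refl _
      · have hXene : (X.erase v).Nonempty := Finset.nonempty_iff_ne_empty.mpr hXv
        have hXesub : X.erase v ⊆ T.erase v := Finset.erase_subset_erase v hXT
        obtain ⟨w, hwX, hwle⟩ := hbdom (X.erase v) hXesub hXene
        refine ⟨w, Finset.mem_of_mem_erase hwX, ?_⟩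
        rw [heval, hstep]
        linarith

/-- The domination lemma, relativized to a finset `S`. -/
lemma dom_lemma (S : Finset (Fin n)) : ∀ h : Finset (Fin n) → ℝ, IsPolymatroid h →
    ∃ c : Finset (Fin n) → ℝ, (∀ W, 0 ≤ c W) ∧ (∀ W, ¬ W ⊂ S → c W = 0) ∧
      (∀ X, X ⊆ S → NEval c X ≤ h X) ∧ (NEval c S = h S) ∧
      (∀ v ∈ S, NEval c {v} = h {v}) := by
  classical
  induction S using Finset.strongInduction with
  | _ S IH =>
  intro h hp
  obtain ⟨h0, hpos, hmono, hsubm⟩ := hp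
  rcases S.eq_empty_or_nonempty with rfl | hS
  · refine ⟨fun _ => 0, fun W => le_refl 0, fun W _ => rfl, ?_, ?_, by simp⟩
    · intro X hX
      rw [Finset.subset_empty] at hX
      subst hX
      simp [NEval, h0]
    · simp [NEval, h0]
  · obtain ⟨u, hu⟩ := hS
    set T := S.erase u with hTdef
    have hTS : T ⊂ S := Finset.erase_ssubset hu
    have huT : u ∉ T := Finset.notMem_erase u S
    set gcon : Finset (Fin n) → ℝ := fun X => h (insert u X) - h {u} with hgcondef
    have hgconp : IsPolymatroid gcon := contraction_polymatroid h ⟨h0, hpos, hmono, hsubm⟩ u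
    obtain ⟨c'', hc0, hcsupp, hcdom, hctop, hcsing⟩ := IH T hTS gcon hgconp
    set φ : Fin n → ℝ := fun w => h (insert u {w}) - h {w} with hφdef
    have hφT : ∀ w ∈ T, 0 ≤ φ w ∧ φ w ≤ h {u} := by
      intro w hw
      have hwu : w ≠ u := Finset.ne_of_mem_erase hw
      constructor
      · have h1 := hmono {w} {u}
        have e : ({w} : Finset (Fin n)) ∪ {u} = insert u {w} := by
          rw [Finset.union_comm, ← Finset.insert_eq]
        rw [e] at h1
        simp only [hφdef, sub_nonneg]
        exact h1
      · have h1 := hsubm {u} {w}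
        have e1 : ({u} : Finset (Fin n)) ∪ {w} = insert u {w} := by
          rw [← Finset.insert_eq]
        have e2 : ({u} : Finset (Fin n)) ∩ {w} = ∅ := by
          ext x
          simp only [Finset.mem_inter, Finset.mem_singleton, Finset.notMem_empty, iff_false]
          rintro ⟨rfl, rfl⟩
          exact hwu rfl
        rw [e1, e2, h0] at h1
        simp only [hφdef]
        linarith
    obtain ⟨b, hb0, hbsupp, hbout, hbsing, hbdom⟩ :=
      chain_lemma T φ (h {u}) (hpos {u}) hφT
    have hc''u : ∀ W, u ∈ W → c'' W = 0 := by
      intro W hW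
      apply hcsupp
      intro hss
      exact huT (hss.1 hW)
    set c : Finset (Fin n) → ℝ :=
      fun W => b W + (if u ∈ W then c'' (W.erase u) else 0) with hcdef
    have heval : ∀ X, NEval c X = NEval b X + NEval c'' (X.erase u) := by
      intro X
      rw [hcdef, NEval_add, NEval_lift u c'' hc''u]
    have hinsT : insert u T = S := Finset.insert_erase hu
    refine ⟨c, ?_, ?_, ?_, ?_, ?_⟩
    · intro W
      apply add_nonneg (hb0 W)
      split
      · exact hc0 _
      · exact le_refl 0
    · intro W hW
      have hb : b W = 0 := by
        apply hbsupp
        intro hsub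
        exact hW (lt_of_le_of_lt hsub hTS)
      simp only [hcdef, hb, zero_add]
      split
      · rename_i hmem
        apply hcsupp
        intro hss
        apply hW
        have hWS : W ⊆ S := by
          intro x hx
          by_cases hxu : x = u
          · exact hxu ▸ hu
          · exact hTS.1 (hss.1 (Finset.mem_erase.mpr ⟨hxu, hx⟩))
        obtain ⟨y, hyT, hyW⟩ := Finset.exists_of_ssubset hss
        refine (Finset.ssubset_iff_of_subset hWS).mpr ⟨y, hTS.1 hyT, ?_⟩
        intro hyWmem
        exact hyW (Finset.mem_erase.mpr ⟨Finset.ne_of_mem_erase hyT, hyWmem⟩)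
      · rfl
    · intro X hXS
      by_cases hux : u ∈ X
      · have hXbT : ¬ X ⊆ T := fun hsub => huT (hsub hux)
        have h1 : NEval c'' (X.erase u) ≤ gcon (X.erase u) :=
          hcdom _ (Finset.erase_subset_erase u hXS)
        have h2 : insert u (X.erase u) = X := Finset.insert_erase hux
        rw [heval, hbout X hXbT]
        simp only [hgcondef] at h1
        rw [h2] at h1
        linarith
      · have hXT : X ⊆ T := Finset.subset_erase.mpr ⟨hXS, hux⟩
        have hXe : X.erase u = X := Finset.erase_eq_of_notMem hux
        rcases X.eq_empty_or_nonempty with rfl | hne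
        · rw [heval]
          simp only [Finset.erase_empty]
          rw [NEval_empty, NEval_empty, h0]
          norm_num
        · obtain ⟨v, hvX, hble⟩ := hbdom X hXT hne
          have h1 : NEval c'' X ≤ gcon X := hcdom _ hXT
          have hvu : v ≠ u := fun hvu => hux (hvu ▸ hvX)
          -- submodularity : h (insert u X) + h {v} ≤ h X + h (insert u {v})
          have h2 := hsubm X (insert u {v})
          have e1 : X ∪ insert u {v} = insert u X := by
            rw [Finset.union_insert, Finset.union_eq_left.mpr
              (Finset.singleton_subset_iff.mpr hvX)]
          have e2 : X ∩ insert u {v} = {v} := by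
            rw [Finset.inter_insert_of_notMem hux, Finset.inter_singleton_of_mem hvX]
          rw [e1, e2] at h2
          simp only [hgcondef] at h1
          simp only [hφdef] at hble
          rw [heval, hXe]
          linarith
    · have hSbT : ¬ S ⊆ T := fun hsub => huT (hsub hu)
      rw [heval, hbout S hSbT]
      have : NEval c'' (S.erase u) = gcon T := hctop
      rw [this]
      simp only [hgcondef]
      rw [hinsT]
      ring
    · intro v hvS
      by_cases hvu : v = u
      · subst hvu
        have h1 : ¬ ({v} : Finset (Fin n)) ⊆ T := by
          rw [Finset.singleton_subset_iff]; exact huT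
        rw [heval, hbout _ h1, Finset.erase_singleton, NEval_empty]
        ring
      · have hvT : v ∈ T := Finset.mem_erase.mpr ⟨hvu, hvS⟩
        have he : ({v} : Finset (Fin n)).erase u = {v} := by
          apply Finset.erase_eq_of_notMem
          simp [Ne.symm hvu]
        rw [heval, he, hbsing v hvT, hcsing v hvT]
        simp only [hgcondef, hφdef]
        ring

end SimpleMaxAux

/-- Simple max-inequalities are essentially-Shannon: if
`q·h([n]) ≤ max_ℓ Σ_j d_{ℓ,j}·h(Y_{ℓ,j}|X_{ℓ,j})` (with all `|X_{ℓ,j}| ≤ 1`) holds for all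
normal polymatroids, then it holds for all polymatroids. -/
theorem simple_max_inequality_essentially_shannon {n k m : ℕ} (q : ℝ) (hq : 0 < q)
    (d : Fin k → Fin m → ℝ) (hd : ∀ ℓ j, 0 ≤ d ℓ j)
    (Xs Ys : Fin k → Fin m → Finset (Fin n))
    (hX : ∀ ℓ j, (Xs ℓ j).card ≤ 1)
    (hnormal : ∀ h : Finset (Fin n) → ℝ, IsNormal h →
      ∃ ℓ : Fin k, q * h Finset.univ ≤
        ∑ j, d ℓ j * (h (Xs ℓ j ∪ Ys ℓ j) - h (Xs ℓ j)))
    (h : Finset (Fin n) → ℝ) (hp : IsPolymatroid h) :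
    ∃ ℓ : Fin k, q * h Finset.univ ≤
      ∑ j, d ℓ j * (h (Xs ℓ j ∪ Ys ℓ j) - h (Xs ℓ j)) := by
  classical
  obtain ⟨c, hc0, hcsupp, hcdom, hctop, hcsing⟩ :=
    SimpleMaxAux.dom_lemma Finset.univ h hp
  have hnorm : IsNormal (SimpleMaxAux.NEval c) := by
    refine ⟨c, hc0, fun X => ?_⟩
    rw [SimpleMaxAux.NEval]
    refine (Finset.sum_filter_of_ne ?_).symm
    intro W _ hne hWuniv
    apply hne
    rw [hcsupp W, zero_mul]
    rw [hWuniv]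
    exact fun hss => absurd rfl (ne_of_lt hss)
  obtain ⟨ℓ, hℓ⟩ := hnormal (SimpleMaxAux.NEval c) hnorm
  refine ⟨ℓ, ?_⟩
  have hXeq : ∀ j, SimpleMaxAux.NEval c (Xs ℓ j) = h (Xs ℓ j) := by
    intro j
    rcases Nat.le_one_iff_eq_zero_or_eq_one.mp (hX ℓ j) with h1 | h1
    · rw [Finset.card_eq_zero] at h1
      rw [h1, SimpleMaxAux.NEval_empty, hp.1]
    · obtain ⟨v, hv⟩ := Finset.card_eq_one.mp h1
      rw [hv]
      exact hcsing v (Finset.mem_univ v)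
  calc q * h Finset.univ = q * SimpleMaxAux.NEval c Finset.univ := by rw [hctop]
    _ ≤ ∑ j, d ℓ j * (SimpleMaxAux.NEval c (Xs ℓ j ∪ Ys ℓ j)
          - SimpleMaxAux.NEval c (Xs ℓ j)) := hℓ
    _ ≤ ∑ j, d ℓ j * (h (Xs ℓ j ∪ Ys ℓ j) - h (Xs ℓ j)) := by
        apply Finset.sum_le_sum
        intro j _
        apply mul_le_mul_of_nonneg_left _ (hd ℓ j)
        have := hcdom (Xs ℓ j ∪ Ys ℓ j) (Finset.subset_univ _)
        rw [hXeq j]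
        linarith
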